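/- Characterization of Nash equilibria realizing a centralized optimum (Theorem 2(b)): suppose each u_i is differentiable, a* is a feasible action profile maximizing Σ_{i∈N} u_i((a_j)_{j∈R_i}) over feasible profiles, l*_{ij} (i ∈ N, j ∈ R_i) are supporting personalized prices (i.e. Σ_{k∈C_j} l*_{kj} = 0 for all j and, for each i, (a*_j)_{j∈R_i} maximizes ā ↦ −Σ_{j∈R_i} l*_{ij}·ā_j + u_i(ā) over ā with ā_i ∈ A_i), and set t*_i := Σ_{j∈R_i} l*_{ij}·a*_j. Then: (1) there exists at least one Nash equilibrium m* of the game induced by the mechanism and the users' payoffs with â_j(m*) = a*_j for all j ∈ N and t̂_i(m*) = t*_i for all i ∈ N; (2) a message profile m* = ((a^{i*}, π^{i*}))_{i∈N} is such a Nash equilibrium (i.e. a NE with â(m*) = a* and t̂(m*) = t*) if and only if it satisfies: (i) (1/|C_j|)·Σ_{k∈C_j} a^{k*}_j = a*_j for all j ∈ N; (ii) π^{σ_j(i)*}_j − π^{σ_j(σ_j(i))*}_j = l*_{ij} for all i ∈ N, j ∈ R_i; (iii) π^{i*}_j·(a^{i*}_j − a^{σ_j(i)*}_j)² = 0 for all i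 ∈ N, j ∈ R_i; (iv) π^{i*}_j ≥ 0 for all i ∈ N, j ∈ R_i. -/

import Mathlib

open Finset

/-- The set `C_j` of users affected by `j`: those `k` with `j ∈ R k`. -/
def affected {N : Type*} [Fintype N] [DecidableEq N] (R : N → Finset N) (j : N) : Finset N :=
  Finset.univ.filter (fun k => j ∈ R k)

/-- The action `â_j(m)` assigned to user `j` by the mechanism. -/
noncomputable def ahat {N : Type*} [Fintype N] [DecidableEq N] (R : N → Finset N)
    (a : N → N → ℝ) (j : N) : ℝ :=
  (∑ k ∈ affected R j, a k j) / ((affected R j).card : ℝ)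

/-- The personalized price `l_{ij}(m)` of user `i` for the action of `j`. -/
def price {N : Type*} (σ : N → N → N) (π : N → N → ℝ) (i j : N) : ℝ :=
  π (σ j i) j - π (σ j (σ j i)) j

/-- The tax `t̂_i(m)` of user `i`. -/
noncomputable def tax {N : Type*} [Fintype N] [DecidableEq N] (R : N → Finset N)
    (σ : N → N → N) (a π : N → N → ℝ) (i : N) : ℝ :=
  ∑ j ∈ R i,
    (price σ π i j * ahat R a j
      + π i j * (a i j - a (σ j i) j) ^ 2
      - π (σ j i) j * (a (σ j i) j - a (σ j (σ j i)) j) ^ 2)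

open Classical in
/-- User `i`'s payoff (valued in `EReal`) at the message profile `(a, π)`. -/
noncomputable def payoff {N : Type*} [Fintype N] [DecidableEq N] (R : N → Finset N)
    (σ : N → N → N) (A : N → Set ℝ) (u : ∀ i : N, (↥(R i) → ℝ) → ℝ)
    (a π : N → N → ℝ) (i : N) : EReal :=
  if ahat R a i ∈ A i then
    (((- tax R σ a π i + u i fun j => ahat R a j.1) : ℝ) : EReal)
  else ⊥

/-- `(a, π)` is a Nash equilibrium of the game induced by the mechanism and the payoffs. -/
def IsNE {N : Type*} [Fintype N] [DecidableEq N] (R : N → Finset N)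
    (σ : N → N → N) (A : N → Set ℝ) (u : ∀ i : N, (↥(R i) → ℝ) → ℝ)
    (a π : N → N → ℝ) : Prop :=
  (∀ i, ∀ j ∈ R i, 0 ≤ π i j) ∧
  ∀ (i : N) (a' π' : N → ℝ), (∀ j ∈ R i, 0 ≤ π' j) →
    payoff R σ A u (Function.update a i a') (Function.update π i π') i ≤
      payoff R σ A u a π i


set_option linter.unusedSectionVars false

section Cyc
variable {N : Type*} [DecidableEq N]

lemma iter_mem {f : N → N} {C : Finset N} (hmaps : Set.MapsTo f ↑C ↑C) {j : N} (hj : j ∈ C) :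
    ∀ n : ℕ, f^[n] j ∈ C := by
  intro n; induction n with
  | zero => simpa
  | succ n ih => rw [Function.iterate_succ_apply']; exact hmaps ih

lemma iter_cancel {f : N → N} {C : Finset N} (hinj : Set.InjOn f ↑C)
    (hmaps : Set.MapsTo f ↑C ↑C) {j : N} (hj : j ∈ C) :
    ∀ (k m n : ℕ), f^[m + k] j = f^[n + k] j → f^[m] j = f^[n] j := by
  intro k
  induction k with
  | zero => intro m n h; simpa using h
  | succ k ih =>
    intro m n h
    apply ih
    have e : ∀ r : ℕ, f^[r + (k + 1)] j = f (f^[r + k] j) := fun r => by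
      rw [show r + (k + 1) = (r + k) + 1 by omega, Function.iterate_succ_apply']
    rw [e, e] at h
    exact hinj (iter_mem hmaps hj _) (iter_mem hmaps hj _) h

lemma cycle_facts {f : N → N} {C : Finset N} (hσ : Set.BijOn f ↑C ↑C)
    (hcyc : ∀ x ∈ C, ∀ y ∈ C, ∃ n : ℕ, f^[n] x = y) {j : N} (hj : j ∈ C) :
    f^[C.card] j = j ∧
    (∀ m n : ℕ, 1 ≤ m → m ≤ C.card → 1 ≤ n → n ≤ C.card → f^[m] j = f^[n] j → m = n) ∧
    (∀ k ∈ C, ∃ m : ℕ, 1 ≤ m ∧ m ≤ C.card ∧ f^[m] j = k) := by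
  have hmaps := hσ.mapsTo
  have hinj := hσ.injOn
  set c := C.card with hc
  have hex : ∃ p : ℕ, 0 < p ∧ f^[p] j = j ∧ p ≤ c := by
    obtain ⟨m, hm, n, hn, hmn, heq⟩ :=
      Finset.exists_ne_map_eq_of_card_lt_of_maps_to (s := Finset.range (c + 1)) (t := C)
        (by simp [hc]) (fun n _ => iter_mem hmaps hj n)
    simp only [Finset.mem_range] at hm hn
    rcases lt_or_gt_of_ne hmn with h | h
    · refine ⟨n - m, by omega, ?_, by omega⟩
      have := iter_cancel hinj hmaps hj m (n - m) 0 (by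
        have e : n - m + m = n := by omega
        simpa [e] using heq.symm)
      simpa using this
    · refine ⟨m - n, by omega, ?_, by omega⟩
      have := iter_cancel hinj hmaps hj n (m - n) 0 (by
        have e : m - n + n = m := by omega
        simpa [e] using heq)
      simpa using this
  have hex' : ∃ p : ℕ, 0 < p ∧ f^[p] j = j := ⟨hex.choose, hex.choose_spec.1, hex.choose_spec.2.1⟩
  set p := Nat.find hex' with hp
  obtain ⟨hppos, hpj⟩ := Nat.find_spec hex'
  have hplec : p ≤ c := by
    obtain ⟨q, hq1, hq2, hq3⟩ := hex
    exact le_trans (Nat.find_le ⟨hq1, hq2⟩) hq3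
  -- periodicity
  have hper : ∀ q r : ℕ, f^[r + p * q] j = f^[r] j := by
    intro q
    induction q with
    | zero => simp
    | succ q ih =>
      intro r
      have : r + p * (q + 1) = (r + p * q) + p := by ring
      rw [this, Function.iterate_add_apply, hpj]
      exact ih r
  have hmod : ∀ n : ℕ, f^[n] j = f^[n % p] j := by
    intro n
    conv_lhs => rw [← Nat.mod_add_div n p]
    exact hper _ _
  -- coverage : C ⊆ image of range p
  have hcov : ∀ k ∈ C, ∃ m : ℕ, m < p ∧ f^[m] j = k := by
    intro k hk
    obtain ⟨n, hn⟩ := hcyc j hj k hk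
    exact ⟨n % p, Nat.mod_lt _ hppos, by rw [← hmod]; exact hn⟩
  have hcle : c ≤ p := by
    have hsub : C ⊆ (Finset.range p).image (fun n => f^[n] j) := by
      intro k hk
      obtain ⟨m, hm1, hm2⟩ := hcov k hk
      exact Finset.mem_image.mpr ⟨m, Finset.mem_range.mpr hm1, hm2⟩
    calc c = C.card := rfl
      _ ≤ ((Finset.range p).image (fun n => f^[n] j)).card := Finset.card_le_card hsub
      _ ≤ (Finset.range p).card := Finset.card_image_le
      _ = p := Finset.card_range p
  have hpc : p = c := le_antisymm hplec hcle
  refine ⟨by rw [← hpc]; exact hpj, ?_, ?_⟩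
  · intro m n hm1 hmc hn1 hnc heq
    by_contra hne
    rcases lt_or_gt_of_ne hne with h | h
    · have hcanc := iter_cancel hinj hmaps hj m (n - m) 0 (by
        have e : n - m + m = n := by omega
        simpa [e] using heq.symm)
      simp only [Function.iterate_zero_apply] at hcanc
      have hlt : n - m < Nat.find hex' := by omega
      exact Nat.find_min hex' hlt ⟨by omega, hcanc⟩
    · have hcanc := iter_cancel hinj hmaps hj n (m - n) 0 (by
        have e : m - n + n = m := by omega
        simpa [e] using heq)
      simp only [Function.iterate_zero_apply] at hcanc
      have hlt : m - n < Nat.find hex' := by omega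
      exact Nat.find_min hex' hlt ⟨by omega, hcanc⟩
  · intro k hk
    obtain ⟨m, hm1, hm2⟩ := hcov k hk
    rcases Nat.eq_zero_or_pos m with h0 | h0
    · exact ⟨c, by omega, le_refl _, by rw [← hpc]; rw [hpj]; rw [h0] at hm2; simpa using hm2⟩
    · exact ⟨m, h0, by omega, hm2⟩

end Cyc
section Cyc2
variable {N : Type*} [DecidableEq N]

lemma sigma_ne {f : N → N} {C : Finset N} (hC3 : 3 ≤ C.card)
    (hcyc : ∀ x ∈ C, ∀ y ∈ C, ∃ n : ℕ, f^[n] x = y) {i : N} (hi : i ∈ C) :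
    f i ≠ i ∧ f (f i) ≠ i := by
  constructor
  · intro h
    have hall : ∀ n : ℕ, f^[n] i = i := by
      intro n; induction n with
      | zero => rfl
      | succ n ih => rw [Function.iterate_succ_apply', ih, h]
    have hsub : C ⊆ {i} := by
      intro y hy
      obtain ⟨n, hn⟩ := hcyc i hi y hy
      simp [← hn, hall n]
    have := Finset.card_le_card hsub
    simp at this; omega
  · intro h
    have hall : ∀ n : ℕ, f^[n] i = i ∨ f^[n] i = f i := by
      intro n; induction n with
      | zero => exact Or.inl rfl
      | succ n ih =>
        rw [Function.iterate_succ_apply']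
        rcases ih with h' | h'
        · rw [h']; exact Or.inr rfl
        · rw [h', h]; exact Or.inl rfl
    have hsub : C ⊆ {i, f i} := by
      intro y hy
      obtain ⟨n, hn⟩ := hcyc i hi y hy
      rcases hall n with h' | h' <;> simp [← hn, h']
    have h1 := Finset.card_le_card hsub
    have h2 : ({i, f i} : Finset N).card ≤ 2 := Finset.card_insert_le _ _ |>.trans (by simp)
    omega

lemma image_eq {f : N → N} {C : Finset N} (hσ : Set.BijOn f ↑C ↑C) : C.image f = C := by
  apply Finset.eq_of_subset_of_card_le
  · intro x hx
    obtain ⟨y, hy, rfl⟩ := Finset.mem_image.mp hx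
    exact hσ.mapsTo hy
  · rw [Finset.card_image_of_injOn hσ.injOn]

lemma sum_comp_eq {f : N → N} {C : Finset N} (hσ : Set.BijOn f ↑C ↑C) (g : N → ℝ) :
    ∑ k ∈ C, g (f k) = ∑ k ∈ C, g k := by
  rw [← Finset.sum_image (fun x hx y hy h => hσ.injOn hx hy h), image_eq hσ]

lemma exists_support_prices {f : N → N} {C : Finset N} (hσ : Set.BijOn f ↑C ↑C)
    (hcyc : ∀ x ∈ C, ∀ y ∈ C, ∃ n : ℕ, f^[n] x = y) {j : N} (hj : j ∈ C) (hC3 : 3 ≤ C.card)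
    (l : N → ℝ) (hsum : ∑ k ∈ C, l k = 0) :
    ∃ p : N → ℝ, (∀ k, 0 ≤ p k) ∧ ∀ i ∈ C, p (f i) - p (f (f i)) = l i := by
  obtain ⟨ha, hb, hc⟩ := cycle_facts hσ hcyc hj
  set c := C.card with hcdef
  set x : ℕ → N := fun n => f^[n] j with hx
  set B : ℝ := ∑ t ∈ Finset.range c, |l (x t)| with hB
  set P : ℕ → ℝ := fun m => B - ∑ t ∈ Finset.range (m - 1), l (x t) with hP
  -- total one-period sum is zero
  have hS : ∑ t ∈ Finset.range c, l (x t) = 0 := by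
    have hshift : ∑ t ∈ Finset.range c, l (x (t + 1)) = ∑ t ∈ Finset.range c, l (x t) := by
      have e1 : ∑ t ∈ Finset.range (c + 1), l (x t)
          = (∑ t ∈ Finset.range c, l (x (t + 1))) + l (x 0) := Finset.sum_range_succ' _ _
      have e2 : ∑ t ∈ Finset.range (c + 1), l (x t)
          = (∑ t ∈ Finset.range c, l (x t)) + l (x c) := Finset.sum_range_succ _ _
      have e3 : x c = x 0 := by simpa [hx] using ha
      rw [e3] at e2
      linarith [e1, e2]
    have hbij : ∑ t ∈ Finset.range c, l (x (t + 1)) = ∑ k ∈ C, l k := by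
      apply Finset.sum_bij (i := fun t _ => x (t + 1))
      · intro t ht
        exact iter_mem hσ.mapsTo hj (t + 1)
      · intro t ht s hs hts
        have := hb (t + 1) (s + 1) (by omega) (by simpa using Finset.mem_range.mp ht)
          (by omega) (by simpa using Finset.mem_range.mp hs) hts
        omega
      · intro k hk
        obtain ⟨m, hm1, hm2, hm3⟩ := hc k hk
        exact ⟨m - 1, Finset.mem_range.mpr (by omega), by rw [show m - 1 + 1 = m by omega]; exact hm3⟩
      · intro t ht; rfl
    rw [← hshift, hbij]; exact hsum
  -- choose index function
  have hind : ∀ k, k ∈ C → ∃ m : ℕ, 1 ≤ m ∧ m ≤ c ∧ x m = k := hc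
  classical
  set ind : N → ℕ := fun k => if h : k ∈ C then (hind k h).choose else 0 with hinddef
  have hindspec : ∀ k (h : k ∈ C), 1 ≤ ind k ∧ ind k ≤ c ∧ x (ind k) = k := by
    intro k h
    simpa [hinddef, h] using (hind k h).choose_spec
  set p : N → ℝ := fun k => if k ∈ C then P (ind k) else B with hpdef
  have hPnonneg : ∀ m : ℕ, m ≤ c → 0 ≤ P m := by
    intro m hm
    have h1 : ∑ t ∈ Finset.range (m - 1), l (x t) ≤ ∑ t ∈ Finset.range (m - 1), |l (x t)| :=
      Finset.sum_le_sum (fun t _ => le_abs_self _)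
    have h2 : ∑ t ∈ Finset.range (m - 1), |l (x t)| ≤ B := by
      rw [hB]
      exact Finset.sum_le_sum_of_subset_of_nonneg
        (Finset.range_subset_range.mpr (by omega)) (fun t _ _ => abs_nonneg _)
    simp only [hP]; linarith
  have hBnonneg : 0 ≤ B := Finset.sum_nonneg (fun t _ => abs_nonneg _)
  refine ⟨p, ?_, ?_⟩
  · intro k
    by_cases h : k ∈ C
    · simp only [hpdef, if_pos h]
      exact hPnonneg _ (hindspec k h).2.1
    · simp only [hpdef, if_neg h]; exact hBnonneg
  · intro i hi
    obtain ⟨hm1, hm2, hm3⟩ := hindspec i hi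
    set m := ind i with hmdef
    have hfi : f i ∈ C := hσ.mapsTo hi
    have hffi : f (f i) ∈ C := hσ.mapsTo hfi
    have hfieq : f i = x (m + 1) := by rw [← hm3]; simp [hx, Function.iterate_succ_apply']
    have hffieq : f (f i) = x (m + 2) := by
      rw [hfieq]; simp [hx, show m + 2 = (m + 1) + 1 by omega, Function.iterate_succ_apply']
    have hxc0 : x c = x 0 := by simpa [hx] using ha
    -- values of ind at f i and f (f i)
    obtain ⟨hn1, hn2, hn3⟩ := hindspec (f i) hfi
    obtain ⟨hq1, hq2, hq3⟩ := hindspec (f (f i)) hffi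
    have hPdiff : ∀ r : ℕ, 1 ≤ r → P r - P (r + 1) = l (x (r - 1)) := by
      intro r hr
      have : ∑ t ∈ Finset.range ((r + 1) - 1), l (x t)
          = (∑ t ∈ Finset.range (r - 1), l (x t)) + l (x (r - 1)) := by
        rw [show (r + 1) - 1 = (r - 1) + 1 by omega]
        exact Finset.sum_range_succ _ _
      simp only [hP]; rw [this]; ring
    simp only [hpdef, if_pos hfi, if_pos hffi]
    by_cases h1 : m + 2 ≤ c
    · -- ind (f i) = m + 1, ind (f (f i)) = m + 2
      have e1 : ind (f i) = m + 1 := hb _ _ hn1 hn2 (by omega) (by omega) (by show x _ = x _; rw [hn3, hfieq])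
      have e2 : ind (f (f i)) = m + 2 := hb _ _ hq1 hq2 (by omega) (by omega) (by show x _ = x _; rw [hq3, hffieq])
      rw [e1, e2]
      have := hPdiff (m + 1) (by omega)
      rw [show m + 1 - 1 = m by omega] at this
      rw [show m + 1 + 1 = m + 2 by omega] at this
      rw [this, hm3]
    · by_cases h2 : m + 1 = c
      · -- f i = x c, ind = c ; f (f i) = x (c+1) = x 1, ind = 1
        have e1 : ind (f i) = c := hb _ _ hn1 hn2 (by omega) (le_refl c)
          (by show x _ = x _; rw [hn3, hfieq, h2])
        have e2 : ind (f (f i)) = 1 := by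
          have hx1 : x (m + 2) = x 1 := by
            rw [show m + 2 = c + 1 by omega]
            have : x (c + 1) = f (x c) := by simp [hx, Function.iterate_succ_apply']
            rw [this, hxc0]
            simp [hx, Function.iterate_succ_apply']
          exact hb _ _ hq1 hq2 (by omega) (by omega) (by show x _ = x _; rw [hq3, hffieq, hx1])
        rw [e1, e2]
        have hcm1 : ∑ t ∈ Finset.range (c - 1), l (x t) + l (x (c - 1)) = 0 := by
          rw [← Finset.sum_range_succ, show (c - 1) + 1 = c by omega]; exact hS
        have : P c - P 1 = l (x (c - 1)) := by
          simp only [hP]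
          rw [show (1 : ℕ) - 1 = 0 by omega]
          simp only [Finset.range_zero, Finset.sum_empty]
          linarith
        rw [this, show c - 1 = m by omega, hm3]
      · -- m = c : i = j
        have hmc : m = c := by omega
        have hieq : i = x 0 := by rw [← hm3, hmc, hxc0]
        have e1 : ind (f i) = 1 := by
          have : x (m + 1) = x 1 := by
            rw [hmc]
            have : x (c + 1) = f (x c) := by simp [hx, Function.iterate_succ_apply']
            rw [this, hxc0]
            simp [hx, Function.iterate_succ_apply']
          exact hb _ _ hn1 hn2 (by omega) (by omega) (by show x _ = x _; rw [hn3, hfieq, this])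
        have e2 : ind (f (f i)) = 2 := by
          have : x (m + 2) = x 2 := by
            rw [hmc, show c + 2 = 2 + c by omega]
            rw [show x (2 + c) = f^[2] (x c) from Function.iterate_add_apply f 2 c j]
            rw [hxc0]
            rfl
          exact hb _ _ hq1 hq2 (by omega) (by omega) (by show x _ = x _; rw [hq3, hffieq, this])
        rw [e1, e2]
        have : P 1 - P 2 = l (x 0) := by
          simp only [hP]
          rw [show (1:ℕ) - 1 = 0 by omega, show (2:ℕ) - 1 = 1 by omega]
          simp [Finset.sum_range_succ]
        rw [this, ← hieq]

end Cyc2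
section Mech
variable {N : Type*} [Fintype N] [DecidableEq N]

lemma mem_affected {R : N → Finset N} {j k : N} : k ∈ affected R j ↔ j ∈ R k := by
  simp [affected]

lemma card_pos_real {R : N → Finset N} {j : N} (hC3 : 3 ≤ (affected R j).card) :
    (0 : ℝ) < ((affected R j).card : ℝ) := by
  exact_mod_cast by omega

lemma ahat_update_mem {R : N → Finset N} (a : N → N → ℝ) {i : N} (a' : N → ℝ) {j : N}
    (hij : i ∈ affected R j) :
    ahat R (Function.update a i a') j
      = ahat R a j + (a' j - a i j) / ((affected R j).card : ℝ) := by
  unfold ahat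
  have he : ∀ k, Function.update a i a' k j = Function.update (fun k => a k j) i (a' j) k := by
    intro k
    rcases eq_or_ne k i with rfl | hne
    · simp
    · simp [Function.update_of_ne hne]
  rw [Finset.sum_congr rfl (fun k _ => he k), Finset.sum_update_of_mem hij,
    Finset.sdiff_singleton_eq_erase, Finset.sum_erase_eq_sub hij]
  ring

lemma sum_price_zero {R : N → Finset N} {σ : N → N → N}
    (hσ : ∀ j, Set.BijOn (σ j) ↑(affected R j) ↑(affected R j)) (π : N → N → ℝ) (j : N) :
    ∑ k ∈ affected R j, price σ π k j = 0 := by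
  unfold price
  rw [Finset.sum_sub_distrib]
  have h1 : ∑ k ∈ affected R j, π (σ j (σ j k)) j = ∑ k ∈ affected R j, π (σ j k) j :=
    sum_comp_eq (hσ j) (fun k => π (σ j k) j)
  rw [h1]
  ring

lemma tax_update {R : N → Finset N} {σ : N → N → N}
    (hC3 : ∀ j, 3 ≤ (affected R j).card)
    (hcyc : ∀ j, ∀ x ∈ affected R j, ∀ y ∈ affected R j, ∃ n : ℕ, (σ j)^[n] x = y)
    (a π : N → N → ℝ) (i : N) (a' π' : N → ℝ) :
    tax R σ (Function.update a i a') (Function.update π i π') i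
      = ∑ j ∈ R i, (price σ π i j * ahat R (Function.update a i a') j
          + π' j * (a' j - a (σ j i) j) ^ 2
          - π (σ j i) j * (a (σ j i) j - a (σ j (σ j i)) j) ^ 2) := by
  unfold tax
  apply Finset.sum_congr rfl
  intro j hj
  have hiC : i ∈ affected R j := mem_affected.mpr hj
  have h1 : σ j i ≠ i := (sigma_ne (hC3 j) (hcyc j) hiC).1
  have h2 : σ j (σ j i) ≠ i := (sigma_ne (hC3 j) (hcyc j) hiC).2
  simp [price, Function.update_of_ne h1, Function.update_of_ne h2]

end Mech
section Main
variable {N : Type*} [Fintype N] [DecidableEq N]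

lemma conditions_imply
    (R : N → Finset N) (σ : N → N → N)
    (hR : ∀ i, i ∈ R i)
    (hC3 : ∀ j, 3 ≤ (affected R j).card)
    (hσ : ∀ j, Set.BijOn (σ j) ↑(affected R j) ↑(affected R j))
    (hcyc : ∀ j, ∀ x ∈ affected R j, ∀ y ∈ affected R j, ∃ n : ℕ, (σ j)^[n] x = y)
    (A : N → Set ℝ)
    (u : ∀ i : N, (↥(R i) → ℝ) → ℝ)
    (astar : N → ℝ) (hfeas : ∀ i, astar i ∈ A i)
    (l : N → N → ℝ)
    (hmax : ∀ i : N, ∀ abar : ↥(R i) → ℝ, abar ⟨i, hR i⟩ ∈ A i →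
      - (∑ j : ↥(R i), l i j.1 * abar j) + u i abar ≤
        - (∑ j : ↥(R i), l i j.1 * astar j.1) + u i (fun j => astar j.1))
    (a π : N → N → ℝ)
    (h1 : ∀ j : N, (∑ k ∈ affected R j, a k j) / ((affected R j).card : ℝ) = astar j)
    (h2 : ∀ i : N, ∀ j ∈ R i, π (σ j i) j - π (σ j (σ j i)) j = l i j)
    (h3 : ∀ i : N, ∀ j ∈ R i, π i j * (a i j - a (σ j i) j) ^ 2 = 0)
    (h4 : ∀ i : N, ∀ j ∈ R i, 0 ≤ π i j) :
    IsNE R σ A u a π ∧ (∀ j, ahat R a j = astar j) ∧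
      (∀ i, tax R σ a π i = ∑ j ∈ R i, l i j * astar j) := by
  have hahat : ∀ j, ahat R a j = astar j := h1
  have hD : ∀ i, ∀ j ∈ R i, π (σ j i) j * (a (σ j i) j - a (σ j (σ j i)) j) ^ 2 = 0 := by
    intro i j hj
    have hσiC : σ j i ∈ affected R j := (hσ j).mapsTo (mem_affected.mpr hj)
    exact h3 (σ j i) j (mem_affected.mp hσiC)
  have htax : ∀ i, tax R σ a π i = ∑ j ∈ R i, l i j * astar j := by
    intro i
    unfold tax
    apply Finset.sum_congr rfl
    intro j hj
    rw [hahat j, h3 i j hj, hD i j hj]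
    have hp : price σ π i j = l i j := h2 i j hj
    rw [hp]; ring
  refine ⟨⟨h4, ?_⟩, hahat, htax⟩
  intro i a' π' hπ'
  have harg : (fun j : ↥(R i) => ahat R a j.1) = (fun j : ↥(R i) => astar j.1) :=
    funext (fun j => hahat j.1)
  have hRHS : payoff R σ A u a π i
      = (((- (∑ j ∈ R i, l i j * astar j) + u i fun j => astar j.1) : ℝ) : EReal) := by
    unfold payoff
    rw [hahat i, if_pos (hfeas i), htax i, harg]
  rw [hRHS]
  by_cases hmem : ahat R (Function.update a i a') i ∈ A i
  · unfold payoff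
    rw [if_pos hmem, EReal.coe_le_coe_iff, tax_update hC3 hcyc a π i a' π']
    set b : N → ℝ := fun j => ahat R (Function.update a i a') j with hbdef
    have hb1 : ∑ j ∈ R i, l i j * b j
        ≤ ∑ j ∈ R i, (price σ π i j * b j + π' j * (a' j - a (σ j i) j) ^ 2
          - π (σ j i) j * (a (σ j i) j - a (σ j (σ j i)) j) ^ 2) := by
      apply Finset.sum_le_sum
      intro j hj
      have hp : price σ π i j = l i j := h2 i j hj
      have hd := hD i j hj
      have hsq : 0 ≤ π' j * (a' j - a (σ j i) j) ^ 2 :=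
        mul_nonneg (hπ' j hj) (sq_nonneg _)
      rw [hp, hd]
      linarith
    have hb2 : - (∑ j ∈ R i, l i j * b j) + u i (fun j => b j.1)
        ≤ - (∑ j ∈ R i, l i j * astar j) + u i (fun j => astar j.1) := by
      have h := hmax i (fun j => b j.1) hmem
      rwa [Finset.sum_coe_sort (R i) (fun j => l i j * b j),
        Finset.sum_coe_sort (R i) (fun j => l i j * astar j)] at h
    linarith
  · unfold payoff
    rw [if_neg hmem]
    exact bot_le

end Main
section Main2
variable {N : Type*} [Fintype N] [DecidableEq N]

lemma NE_implies
    (R : N → Finset N) (σ : N → N → N)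
    (hR : ∀ i, i ∈ R i)
    (hC3 : ∀ j, 3 ≤ (affected R j).card)
    (hσ : ∀ j, Set.BijOn (σ j) ↑(affected R j) ↑(affected R j))
    (hcyc : ∀ j, ∀ x ∈ affected R j, ∀ y ∈ affected R j, ∃ n : ℕ, (σ j)^[n] x = y)
    (A : N → Set ℝ)
    (u : ∀ i : N, (↥(R i) → ℝ) → ℝ)
    (hdiff : ∀ i, Differentiable ℝ (u i))
    (astar : N → ℝ) (hfeas : ∀ i, astar i ∈ A i)
    (l : N → N → ℝ)
    (hlsum : ∀ j : N, ∑ k ∈ affected R j, l k j = 0)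
    (hmax : ∀ i : N, ∀ abar : ↥(R i) → ℝ, abar ⟨i, hR i⟩ ∈ A i →
      - (∑ j : ↥(R i), l i j.1 * abar j) + u i abar ≤
        - (∑ j : ↥(R i), l i j.1 * astar j.1) + u i (fun j => astar j.1))
    (a π : N → N → ℝ)
    (hne : IsNE R σ A u a π)
    (hah : ∀ j : N, ahat R a j = astar j)
    (ht : ∀ i : N, tax R σ a π i = ∑ j ∈ R i, l i j * astar j) :
    (∀ i : N, ∀ j ∈ R i, π (σ j i) j - π (σ j (σ j i)) j = l i j) ∧
    (∀ i : N, ∀ j ∈ R i, π i j * (a i j - a (σ j i) j) ^ 2 = 0) := by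
  -- notation
  set D : N → N → ℝ :=
    fun i j => π (σ j i) j * (a (σ j i) j - a (σ j (σ j i)) j) ^ 2 with hDdef
  -- equilibrium payoff value
  have hargs : ∀ i : N, (fun j : ↥(R i) => ahat R a j.1) = (fun j : ↥(R i) => astar j.1) :=
    fun i => funext (fun j => hah j.1)
  have hRHS : ∀ i : N, payoff R σ A u a π i
      = (((- (∑ j ∈ R i, l i j * astar j) + u i fun j => astar j.1) : ℝ) : EReal) := by
    intro i
    unfold payoff
    rw [hah i, if_pos (hfeas i), ht i, hargs i]
  -- master inequality
  have hstar : ∀ i : N, ∀ b : N → ℝ, b i ∈ A i →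
      - (∑ j ∈ R i, (price σ π i j * b j - D i j)) + u i (fun j : ↥(R i) => b j.1)
        ≤ - (∑ j ∈ R i, l i j * astar j) + u i (fun j : ↥(R i) => astar j.1) := by
    intro i b hbA
    set a' : N → ℝ := fun j => a i j + ((affected R j).card : ℝ) * (b j - astar j) with ha'
    have hbj : ∀ j ∈ R i, ahat R (Function.update a i a') j = b j := by
      intro j hj
      rw [ahat_update_mem a a' (mem_affected.mpr hj), hah j]
      have hc := card_pos_real (hC3 j)
      field_simp
      simp only [ha']
      ring
    have hneq := hne.2 i a' (fun _ => 0) (fun j _ => le_refl 0)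
    rw [hRHS i] at hneq
    unfold payoff at hneq
    rw [if_pos (by rw [hbj i (hR i)]; exact hbA)] at hneq
    rw [EReal.coe_le_coe_iff] at hneq
    have hargb : (fun j : ↥(R i) => ahat R (Function.update a i a') j.1)
        = (fun j : ↥(R i) => b j.1) := funext (fun j => hbj j.1 j.2)
    rw [hargb] at hneq
    rw [tax_update hC3 hcyc a π i a' (fun _ => 0)] at hneq
    have hsimp : ∑ j ∈ R i, (price σ π i j * ahat R (Function.update a i a') j
          + (fun _ : N => (0:ℝ)) j * (a' j - a (σ j i) j) ^ 2
          - π (σ j i) j * (a (σ j i) j - a (σ j (σ j i)) j) ^ 2)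
        = ∑ j ∈ R i, (price σ π i j * b j - D i j) := by
      apply Finset.sum_congr rfl
      intro j hj
      rw [hbj j hj]
      simp [hDdef]
    rw [hsimp] at hneq
    exact hneq
  -- equilibrium tax expansion
  have htexp : ∀ i : N, ∑ j ∈ R i, (price σ π i j * astar j
      + π i j * (a i j - a (σ j i) j) ^ 2 - D i j) = ∑ j ∈ R i, l i j * astar j := by
    intro i
    rw [← ht i]
    unfold tax
    exact Finset.sum_congr rfl (fun j hj => by rw [hah j])
  -- condition (iii)
  have h3 : ∀ i : N, ∀ j ∈ R i, π i j * (a i j - a (σ j i) j) ^ 2 = 0 := by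
    intro i
    have hinst := hstar i astar (hfeas i)
    have hle : ∑ j ∈ R i, l i j * astar j ≤ ∑ j ∈ R i, (price σ π i j * astar j - D i j) := by
      linarith
    have hdiffsum : ∑ j ∈ R i, (price σ π i j * astar j
        + π i j * (a i j - a (σ j i) j) ^ 2 - D i j)
        - ∑ j ∈ R i, (price σ π i j * astar j - D i j)
        = ∑ j ∈ R i, π i j * (a i j - a (σ j i) j) ^ 2 := by
      rw [← Finset.sum_sub_distrib]
      exact Finset.sum_congr rfl (fun j hj => by ring)
    have hsum0 : ∑ j ∈ R i, π i j * (a i j - a (σ j i) j) ^ 2 ≤ 0 := by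
      rw [← hdiffsum, htexp i]; linarith
    have hnn : ∀ j ∈ R i, 0 ≤ π i j * (a i j - a (σ j i) j) ^ 2 :=
      fun j hj => mul_nonneg (hne.1 i j hj) (sq_nonneg _)
    have := le_antisymm hsum0 (Finset.sum_nonneg hnn)
    exact fun j hj => (Finset.sum_eq_zero_iff_of_nonneg hnn).mp this j hj
  -- D vanishes
  have hD0 : ∀ i : N, ∀ j ∈ R i, D i j = 0 := by
    intro i j hj
    have hσiC : σ j i ∈ affected R j := (hσ j).mapsTo (mem_affected.mpr hj)
    exact h3 (σ j i) j (mem_affected.mp hσiC)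
  -- refined equilibrium tax : sum of price * astar equals sum of l * astar
  have htL : ∀ i : N, ∑ j ∈ R i, price σ π i j * astar j = ∑ j ∈ R i, l i j * astar j := by
    intro i
    rw [← htexp i]
    exact Finset.sum_congr rfl (fun j hj => by rw [h3 i j hj, hD0 i j hj]; ring)
  -- refined master inequality
  have hdagger : ∀ i : N, ∀ b : N → ℝ, b i ∈ A i →
      - (∑ j ∈ R i, price σ π i j * b j) + u i (fun j : ↥(R i) => b j.1)
        ≤ - (∑ j ∈ R i, price σ π i j * astar j) + u i (fun j : ↥(R i) => astar j.1) := by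
    intro i b hbA
    have h1 := hstar i b hbA
    have e1 : ∑ j ∈ R i, (price σ π i j * b j - D i j) = ∑ j ∈ R i, price σ π i j * b j :=
      Finset.sum_congr rfl (fun j hj => by rw [hD0 i j hj]; ring)
    rw [e1, ← htL i] at h1
    exact h1
  -- FOC : price = l off the diagonal
  have h2' : ∀ i : N, ∀ j0 ∈ R i, j0 ≠ i → price σ π i j0 = l i j0 := by
    intro i j0 hj0 hne0
    classical
    set e : N → ℝ := fun k => if k = j0 then 1 else 0 with hedef
    set g : ℝ → (↥(R i) → ℝ) := fun t k => astar k.1 + t * e k.1 with hgdef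
    have hg0 : g 0 = fun k : ↥(R i) => astar k.1 := by
      funext k; simp [hgdef]
    have hgderiv : HasDerivAt g (fun k : ↥(R i) => e k.1) 0 := by
      rw [hasDerivAt_pi]
      intro k
      simp only [hgdef]; simpa only [one_mul] using ((hasDerivAt_id' (0:ℝ)).mul_const (e k.1)).const_add (astar k.1)
    set d : ℝ := (fderiv ℝ (u i) (g 0)) (fun k : ↥(R i) => e k.1) with hddef
    have hφ : HasDerivAt (fun t => u i (g t)) d 0 := by
      have := ((hdiff i (g 0)).hasFDerivAt).comp_hasDerivAt 0 hgderiv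
      exact this
    -- sum expansions
    have hsumP : ∀ t : ℝ, ∑ j ∈ R i, price σ π i j * (astar j + t * e j)
        = (∑ j ∈ R i, price σ π i j * astar j) + price σ π i j0 * t := by
      intro t
      simp only [mul_add, Finset.sum_add_distrib]
      congr 1
      have : ∀ j ∈ R i, price σ π i j * (t * e j)
          = if j = j0 then price σ π i j * t else 0 := by
        intro j hj
        by_cases h : j = j0 <;> simp [hedef, h] <;> ring
      rw [Finset.sum_congr rfl this, Finset.sum_ite_eq' (R i) j0 (fun j => price σ π i j * t)]
      simp [hj0]
    have hsumL : ∀ t : ℝ, ∑ j ∈ R i, l i j * (astar j + t * e j)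
        = (∑ j ∈ R i, l i j * astar j) + l i j0 * t := by
      intro t
      simp only [mul_add, Finset.sum_add_distrib]
      congr 1
      have : ∀ j ∈ R i, l i j * (t * e j) = if j = j0 then l i j * t else 0 := by
        intro j hj
        by_cases h : j = j0 <;> simp [hedef, h] <;> ring
      rw [Finset.sum_congr rfl this, Finset.sum_ite_eq' (R i) j0 (fun j => l i j * t)]
      simp [hj0]
    have hbi : ∀ t : ℝ, astar i + t * e i = astar i := by
      intro t
      simp [hedef, if_neg (fun h : i = j0 => hne0 h.symm)]
    -- F minimization
    have hFge : ∀ t : ℝ, 0 ≤ price σ π i j0 * t - (u i (g t) - u i (g 0)) := by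
      intro t
      have hbA : (fun j : N => astar j + t * e j) i ∈ A i := by
        show astar i + t * e i ∈ A i
        rw [hbi t]; exact hfeas i
      have h1 := hdagger i (fun j => astar j + t * e j) hbA
      rw [hsumP t] at h1
      have : (fun j : ↥(R i) => astar j.1 + t * e j.1) = g t := rfl
      rw [this, ← hg0] at h1
      linarith
    have hGge : ∀ t : ℝ, 0 ≤ l i j0 * t - (u i (g t) - u i (g 0)) := by
      intro t
      have hbA : g t ⟨i, hR i⟩ ∈ A i := by
        show astar i + t * e i ∈ A i
        rw [hbi t]; exact hfeas i
      have h1 := hmax i (g t) hbA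
      rw [Finset.sum_coe_sort (R i) (fun j => l i j * (astar j + t * e j))] at h1
      rw [Finset.sum_coe_sort (R i) (fun j => l i j * astar j)] at h1
      rw [hsumL t] at h1
      rw [← hg0] at h1
      linarith
    have hF : HasDerivAt (fun t => price σ π i j0 * t - (u i (g t) - u i (g 0)))
        (price σ π i j0 - d) 0 := by
      have := ((hasDerivAt_id (0:ℝ)).const_mul (price σ π i j0)).sub (hφ.sub_const (u i (g 0)))
      simp only [mul_one] at this; exact this
    have hG : HasDerivAt (fun t => l i j0 * t - (u i (g t) - u i (g 0)))
        (l i j0 - d) 0 := by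
      have := ((hasDerivAt_id (0:ℝ)).const_mul (l i j0)).sub (hφ.sub_const (u i (g 0)))
      simp only [mul_one] at this; exact this
    have hminF : IsLocalMin (fun t => price σ π i j0 * t - (u i (g t) - u i (g 0))) 0 :=
      Filter.Eventually.of_forall (fun t => by simpa using hFge t)
    have hminG : IsLocalMin (fun t => l i j0 * t - (u i (g t) - u i (g 0))) 0 :=
      Filter.Eventually.of_forall (fun t => by simpa using hGge t)
    have e1 : price σ π i j0 - d = 0 := hminF.hasDerivAt_eq_zero hF
    have e2 : l i j0 - d = 0 := hminG.hasDerivAt_eq_zero hG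
    linarith
  refine ⟨?_, h3⟩
  intro i j hj
  by_cases hij : j = i
  · subst hij
    have hjC : j ∈ affected R j := mem_affected.mpr (hR j)
    have hCsum := sum_price_zero hσ π j
    have e1 := Finset.add_sum_erase _ (fun k => price σ π k j) hjC
    have e2 := Finset.add_sum_erase _ (fun k => l k j) hjC
    have e3 : ∑ k ∈ (affected R j).erase j, price σ π k j
        = ∑ k ∈ (affected R j).erase j, l k j := by
      apply Finset.sum_congr rfl
      intro k hk
      have hkC : k ∈ affected R j := Finset.mem_of_mem_erase hk
      have hkj : k ≠ j := (Finset.mem_erase.mp hk).1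
      exact h2' k j (mem_affected.mp hkC) (fun h => hkj h.symm)
    have : price σ π j j = l j j := by
      rw [hlsum j] at e2
      rw [hCsum] at e1
      linarith
    exact this
  · exact h2' i j hj hij

end Main2

/-- Theorem 2(b): existence of a Nash equilibrium realizing a given
centralized optimum `a*` with taxes `t*_i = Σ_{j∈R_i} l*_{ij}·a*_j`, and the
characterization of all such Nash equilibria by conditions (i)–(iv). -/
theorem NE_realizing_optimum_characterization
    {N : Type*} [Fintype N] [DecidableEq N]
    (R : N → Finset N) (σ : N → N → N)
    (hR : ∀ i, i ∈ R i)
    (hC3 : ∀ j, 3 ≤ (affected R j).card)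
    (hσ : ∀ j, Set.BijOn (σ j) ↑(affected R j) ↑(affected R j))
    (hcyc : ∀ j, ∀ x ∈ affected R j, ∀ y ∈ affected R j, ∃ n : ℕ, (σ j)^[n] x = y)
    (A : N → Set ℝ)
    (hA0 : ∀ i, (0 : ℝ) ∈ A i) (hAconv : ∀ i, Convex ℝ (A i)) (hAcomp : ∀ i, IsCompact (A i))
    (u : ∀ i : N, (↥(R i) → ℝ) → ℝ)
    (hu : ∀ i, ConcaveOn ℝ Set.univ (u i))
    (hdiff : ∀ i, Differentiable ℝ (u i))
    -- `a*` is a centralized optimum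
    (astar : N → ℝ) (hfeas : ∀ i, astar i ∈ A i)
    (hopt : ∀ b : N → ℝ, (∀ i, b i ∈ A i) →
      ∑ i, u i (fun j => b j.1) ≤ ∑ i, u i (fun j => astar j.1))
    -- `l*` are supporting personalized prices for `a*`
    (l : N → N → ℝ)
    (hlsum : ∀ j : N, ∑ k ∈ affected R j, l k j = 0)
    (hmax : ∀ i : N, ∀ abar : ↥(R i) → ℝ, abar ⟨i, hR i⟩ ∈ A i →
      - (∑ j : ↥(R i), l i j.1 * abar j) + u i abar ≤
        - (∑ j : ↥(R i), l i j.1 * astar j.1) + u i (fun j => astar j.1)) :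
    -- (1) there exists at least one NE realizing (a*, t*)
    (∃ a π : N → N → ℝ, IsNE R σ A u a π ∧
      (∀ j : N, ahat R a j = astar j) ∧
      (∀ i : N, tax R σ a π i = ∑ j ∈ R i, l i j * astar j)) ∧
    -- (2) a message profile is a NE realizing (a*, t*) iff it satisfies (i)-(iv)
    (∀ a π : N → N → ℝ,
      (IsNE R σ A u a π ∧
        (∀ j : N, ahat R a j = astar j) ∧
        (∀ i : N, tax R σ a π i = ∑ j ∈ R i, l i j * astar j))
      ↔
      ((∀ j : N, (∑ k ∈ affected R j, a k j) / ((affected R j).card : ℝ) = astar j) ∧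
       (∀ i : N, ∀ j ∈ R i, π (σ j i) j - π (σ j (σ j i)) j = l i j) ∧
       (∀ i : N, ∀ j ∈ R i, π i j * (a i j - a (σ j i) j) ^ 2 = 0) ∧
       (∀ i : N, ∀ j ∈ R i, 0 ≤ π i j))) := by
  have hiff : ∀ a π : N → N → ℝ,
      (IsNE R σ A u a π ∧
        (∀ j : N, ahat R a j = astar j) ∧
        (∀ i : N, tax R σ a π i = ∑ j ∈ R i, l i j * astar j))
      ↔
      ((∀ j : N, (∑ k ∈ affected R j, a k j) / ((affected R j).card : ℝ) = astar j) ∧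
       (∀ i : N, ∀ j ∈ R i, π (σ j i) j - π (σ j (σ j i)) j = l i j) ∧
       (∀ i : N, ∀ j ∈ R i, π i j * (a i j - a (σ j i) j) ^ 2 = 0) ∧
       (∀ i : N, ∀ j ∈ R i, 0 ≤ π i j)) := by
    intro a π
    constructor
    · rintro ⟨hne, hah, ht⟩
      obtain ⟨h2, h3⟩ := NE_implies R σ hR hC3 hσ hcyc A u hdiff astar hfeas l hlsum hmax
        a π hne hah ht
      exact ⟨fun j => hah j, h2, h3, hne.1⟩
    · rintro ⟨h1, h2, h3, h4⟩
      exact conditions_imply R σ hR hC3 hσ hcyc A u astar hfeas l hmax a π h1 h2 h3 h4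
  constructor
  · classical
    set a0 : N → N → ℝ := fun _ j => astar j with ha0
    have hsupp : ∀ j : N, ∃ p : N → ℝ, (∀ k, 0 ≤ p k) ∧
        ∀ i ∈ affected R j, p (σ j i) - p (σ j (σ j i)) = l i j :=
      fun j => exists_support_prices (hσ j) (hcyc j) (mem_affected.mpr (hR j)) (hC3 j)
        (fun k => l k j) (hlsum j)
    set π0 : N → N → ℝ := fun k j => (hsupp j).choose k with hπ0
    refine ⟨a0, π0, (hiff a0 π0).mpr ⟨?_, ?_, ?_, ?_⟩⟩
    · intro j
      have hc : ((affected R j).card : ℝ) ≠ 0 := ne_of_gt (card_pos_real (hC3 j))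
      show (∑ _k ∈ affected R j, astar j) / ((affected R j).card : ℝ) = astar j
      rw [Finset.sum_const, nsmul_eq_mul]
      exact mul_div_cancel_left₀ (astar j) hc
    · intro i j hj
      exact (hsupp j).choose_spec.2 i (mem_affected.mpr hj)
    · intro i j hj
      simp [ha0]
    · intro i j hj
      exact (hsupp j).choose_spec.1 _
  · exact hiff
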